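/- Let m̂, m, d ∈ ℕ, p ∈ [2, ∞), A be a real m̂ × m matrix, B a real m × d matrix, and x ∈ ℝ^m with Ax ≠ 0. For f(x) = |Ax|^p it holds that tr(D²f(x) · B Bᵀ) = p · |Ax|^{p−2} · ( ‖AB‖² + (p − 2) · |(AB)ᵀ Ax|² / |Ax|² ), where ‖AB‖ is the Hilbert–Schmidt (Frobenius) norm of AB. -/

import Mathlib

open Matrix

/-- The Euclidean norm on `ℝ^n`. -/
noncomputable def eNorm {n : ℕ} (x : Fin n → ℝ) : ℝ := Real.sqrt (∑ i, x i ^ 2)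

/-- The Hilbert–Schmidt (Frobenius) norm of a real matrix. -/
noncomputable def hsNorm {d m : ℕ} (A : Matrix (Fin d) (Fin m) ℝ) : ℝ :=
  Real.sqrt (∑ i, ∑ j, A i j ^ 2)

section aux

variable {mh m : ℕ}

/-- The `i`-th coordinate of `A *ᵥ ·` as a continuous linear map. -/
noncomputable def ell (A : Matrix (Fin mh) (Fin m) ℝ) (i : Fin mh) : (Fin m → ℝ) →L[ℝ] ℝ :=
  LinearMap.toContinuousLinearMap ((LinearMap.proj i).comp A.mulVecLin)

lemma ell_apply (A : Matrix (Fin mh) (Fin m) ℝ) (i : Fin mh) (y : Fin m → ℝ) :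
    ell A i y = A.mulVec y i := rfl

/-- `g(y) = |Ay|²`. -/
noncomputable def gfun (A : Matrix (Fin mh) (Fin m) ℝ) (y : Fin m → ℝ) : ℝ :=
  ∑ i, A.mulVec y i ^ 2

/-- The derivative of `gfun`. -/
noncomputable def Dg (A : Matrix (Fin mh) (Fin m) ℝ) (y : Fin m → ℝ) : (Fin m → ℝ) →L[ℝ] ℝ :=
  ∑ i, (2 * A.mulVec y i) • ell A i

lemma hasFDerivAt_gfun (A : Matrix (Fin mh) (Fin m) ℝ) (y : Fin m → ℝ) :
    HasFDerivAt (gfun A) (Dg A y) y := by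
  apply HasFDerivAt.fun_sum
  intro i _
  have h := ((ell A i).hasFDerivAt (x := y)).fun_mul ((ell A i).hasFDerivAt (x := y))
  simp only [ell_apply] at h
  convert h using 1
  · rfl
  · ext z; simp [ell_apply, sq]
  · rw [two_mul, add_smul]

lemma continuous_gfun (A : Matrix (Fin mh) (Fin m) ℝ) : Continuous (gfun A) := by
  have : gfun A = fun y => ∑ i, (ell A i y) ^ 2 := by
    funext y; simp [gfun, ell_apply]
  rw [this]
  exact continuous_finset_sum _ fun i _ => ((ell A i).continuous.pow 2)

lemma Dg_single (A : Matrix (Fin mh) (Fin m) ℝ) (y : Fin m → ℝ) (j : Fin m) :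
    Dg A y (Pi.single j 1) = 2 * (Aᵀ * A).mulVec y j := by
  have h2 : (Aᵀ * A).mulVec y j = ∑ i, A i j * A.mulVec y i := by
    rw [← Matrix.mulVec_mulVec]
    simp [Matrix.mulVec, dotProduct, Matrix.transpose_apply]
  rw [h2]
  simp only [Dg, ContinuousLinearMap.sum_apply, ContinuousLinearMap.smul_apply, smul_eq_mul,
    ell_apply, Matrix.mulVec_single_one, Matrix.col_apply, Finset.mul_sum]
  apply Finset.sum_congr rfl
  intro i _
  ring

lemma sqrt_rpow_eq {n : ℕ} (x : Fin n → ℝ) (q : ℝ) :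
    eNorm x ^ q = (∑ i, x i ^ 2) ^ (q / 2) := by
  have hs : (0:ℝ) ≤ ∑ i, x i ^ 2 := Finset.sum_nonneg fun i _ => sq_nonneg _
  rw [eNorm, Real.sqrt_eq_rpow, ← Real.rpow_mul hs]
  congr 1
  ring

lemma gfun_pos (A : Matrix (Fin mh) (Fin m) ℝ) (x : Fin m → ℝ) (hAx : A.mulVec x ≠ 0) :
    0 < gfun A x := by
  rcases (lt_or_eq_of_le (Finset.sum_nonneg fun i _ => sq_nonneg (A.mulVec x i))) with h | h
  · exact h
  · exfalso
    apply hAx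
    funext i
    have := (Finset.sum_eq_zero_iff_of_nonneg (fun i _ => sq_nonneg (A.mulVec x i))).1 h.symm
      i (Finset.mem_univ i)
    simpa [sq] using pow_eq_zero_iff (n := 2) (by norm_num) |>.1 this

/-- The Hessian entries of `y ↦ |Ay|ᵖ`. -/
lemma hessian_entry (p : ℝ) (hp : 2 ≤ p) (A : Matrix (Fin mh) (Fin m) ℝ)
    (x : Fin m → ℝ) (hAx : A.mulVec x ≠ 0) (i j : Fin m) :
    fderiv ℝ (fun y : Fin m → ℝ =>
        fderiv ℝ (fun z : Fin m → ℝ => eNorm (A.mulVec z) ^ p) y (Pi.single j 1))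
      x (Pi.single i 1) =
    p * ((p - 2) * gfun A x ^ (p/2 - 2) * (Aᵀ * A).mulVec x i * (Aᵀ * A).mulVec x j
        + gfun A x ^ (p/2 - 1) * (Aᵀ * A) j i) := by
  have hG : 0 < gfun A x := gfun_pos A x hAx
  -- rewrite the function as a power of gfun
  have hfe : (fun z : Fin m → ℝ => eNorm (A.mulVec z) ^ p) = fun z => gfun A z ^ (p/2) := by
    funext z; rw [sqrt_rpow_eq]; rfl
  rw [hfe]
  -- the first derivative on the set where gfun ≠ 0
  have hinner : ∀ y : Fin m → ℝ, 0 < gfun A y →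
      fderiv ℝ (fun z => gfun A z ^ (p/2)) y (Pi.single j 1)
        = p * (gfun A y ^ (p/2 - 1) * (Aᵀ * A).mulVec y j) := by
    intro y hy
    have hd : HasFDerivAt (fun z => gfun A z ^ (p/2))
        ((p/2 * gfun A y ^ (p/2 - 1)) • Dg A y) y :=
      (Real.hasDerivAt_rpow_const (Or.inl hy.ne')).comp_hasFDerivAt y (hasFDerivAt_gfun A y)
    rw [hd.fderiv]
    simp only [ContinuousLinearMap.smul_apply, smul_eq_mul, Dg_single]
    ring
  -- eventual equality near x
  have hev : (fun y => fderiv ℝ (fun z => gfun A z ^ (p/2)) y (Pi.single j 1))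
      =ᶠ[nhds x] (fun y => p * (gfun A y ^ (p/2 - 1) * (Aᵀ * A).mulVec y j)) := by
    have hopen : ∀ᶠ y in nhds x, 0 < gfun A y :=
      ((continuous_gfun A).continuousAt (x := x)).eventually (eventually_gt_nhds hG)
    exact hopen.mono fun y hy => hinner y hy
  rw [hev.fderiv_eq]
  -- derivative of the closed-form first derivative
  have h1 : HasFDerivAt (fun y => gfun A y ^ (p/2 - 1))
      (((p/2 - 1) * gfun A x ^ (p/2 - 1 - 1)) • Dg A x) x :=
    (Real.hasDerivAt_rpow_const (Or.inl hG.ne')).comp_hasFDerivAt x (hasFDerivAt_gfun A x)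
  have h2 : HasFDerivAt (fun y => (Aᵀ * A).mulVec y j) (ell (Aᵀ * A) j) x := by
    have := (ell (Aᵀ * A) j).hasFDerivAt (x := x)
    exact this
  have h3 := (h1.fun_mul h2).const_mul p
  rw [h3.fderiv]
  simp only [ContinuousLinearMap.smul_apply, ContinuousLinearMap.add_apply,
    ContinuousLinearMap.smul_apply, smul_eq_mul, Dg_single, ell_apply, Matrix.mulVec_single_one, Matrix.col_apply]
  have he : p/2 - 1 - 1 = p/2 - 2 := by ring
  rw [he]
  ring

end aux

/-- For `f(x) = |Ax|^p`, `p ∈ [2,∞)` and `Ax ≠ 0`, writing `D²f(x)` for the Hessian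
matrix of second partial derivatives of `f` at `x`, one has
`tr(D²f(x) B Bᵀ) = p |Ax|^{p-2} (‖AB‖² + (p-2) |(AB)ᵀAx|²/|Ax|²)`. -/
theorem stmt_7 (mh m d : ℕ) (p : ℝ) (hp : 2 ≤ p)
    (A : Matrix (Fin mh) (Fin m) ℝ) (B : Matrix (Fin m) (Fin d) ℝ)
    (x : Fin m → ℝ) (hAx : A.mulVec x ≠ 0) :
    (Matrix.of (fun i j =>
        fderiv ℝ (fun y : Fin m → ℝ =>
            fderiv ℝ (fun z : Fin m → ℝ => eNorm (A.mulVec z) ^ p) y (Pi.single j 1))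
          x (Pi.single i 1)) * (B * Bᵀ)).trace =
      p * eNorm (A.mulVec x) ^ (p - 2) *
        (hsNorm (A * B) ^ 2 +
          (p - 2) * eNorm ((A * B)ᵀ.mulVec (A.mulVec x)) ^ 2 / eNorm (A.mulVec x) ^ 2) := by
  classical
  have hG : 0 < gfun A x := gfun_pos A x hAx
  have hLHS : (Matrix.of (fun i j =>
      fderiv ℝ (fun y : Fin m → ℝ =>
          fderiv ℝ (fun z : Fin m → ℝ => eNorm (A.mulVec z) ^ p) y (Pi.single j 1))
        x (Pi.single i 1)) * (B * Bᵀ)).trace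
      = ∑ i, ∑ j, (p * ((p - 2) * gfun A x ^ (p/2 - 2) * (Aᵀ * A).mulVec x i * (Aᵀ * A).mulVec x j
          + gfun A x ^ (p/2 - 1) * (Aᵀ * A) j i)) * (B * Bᵀ) j i := by
    rw [Matrix.trace]
    simp only [Matrix.diag_apply, Matrix.mul_apply (M := Matrix.of _), Matrix.of_apply]
    apply Finset.sum_congr rfl; intro i _
    apply Finset.sum_congr rfl; intro j _
    rw [hessian_entry p hp A x hAx i j]
  rw [hLHS]
  have hsplit : ∑ i, ∑ j, (p * ((p - 2) * gfun A x ^ (p/2 - 2) * (Aᵀ * A).mulVec x i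
            * (Aᵀ * A).mulVec x j
          + gfun A x ^ (p/2 - 1) * (Aᵀ * A) j i)) * (B * Bᵀ) j i
      = p * (p - 2) * gfun A x ^ (p/2 - 2)
          * (∑ i, ∑ j, (Aᵀ * A).mulVec x i * (Aᵀ * A).mulVec x j * (B * Bᵀ) j i)
        + p * gfun A x ^ (p/2 - 1) * (∑ i, ∑ j, (Aᵀ * A) j i * (B * Bᵀ) j i) := by
    simp only [Finset.mul_sum, ← Finset.sum_add_distrib]
    apply Finset.sum_congr rfl; intro i _
    apply Finset.sum_congr rfl; intro j _
    ring
  rw [hsplit]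
  have hS2 : ∑ i, ∑ j, (Aᵀ * A).mulVec x i * (Aᵀ * A).mulVec x j * (B * Bᵀ) j i
      = ∑ k, (Bᵀ.mulVec ((Aᵀ * A).mulVec x) k) ^ 2 := by
    set v : Fin m → ℝ := (Aᵀ * A).mulVec x with hvdef
    have step1 : ∑ i, ∑ j, v i * v j * (B * Bᵀ) j i = v ⬝ᵥ (v ᵥ* (B * Bᵀ)) := by
      simp only [dotProduct, Matrix.vecMul, Finset.mul_sum]
      apply Finset.sum_congr rfl; intro i _
      apply Finset.sum_congr rfl; intro j _
      ring
    rw [step1, ← Matrix.vecMul_vecMul, Matrix.vecMul_transpose,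
      Matrix.dotProduct_mulVec, ← Matrix.mulVec_transpose]
    simp [dotProduct, sq]
  have hS1 : ∑ i, ∑ j, (Aᵀ * A) j i * (B * Bᵀ) j i = ∑ l, ∑ k, (A * B) l k ^ 2 := by
    have step1 : ∑ i, ∑ j, (Aᵀ * A) j i * (B * Bᵀ) j i = ((Aᵀ * A) * (B * Bᵀ)).trace := by
      rw [Matrix.trace]
      simp only [Matrix.diag_apply, Matrix.mul_apply, Matrix.transpose_apply]
      apply Finset.sum_congr rfl; intro i _
      apply Finset.sum_congr rfl; intro j _
      congr 1
      apply Finset.sum_congr rfl; intro l _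
      ring
    rw [step1]
    have step2 : (Aᵀ * A) * (B * Bᵀ) = Aᵀ * (A * B) * Bᵀ := by
      simp only [Matrix.mul_assoc]
    rw [step2, Matrix.trace_mul_cycle, ← Matrix.transpose_mul]
    rw [Matrix.trace]
    simp only [Matrix.diag_apply, Matrix.mul_apply, Matrix.transpose_apply]
    rw [Finset.sum_comm]
    apply Finset.sum_congr rfl; intro l _
    apply Finset.sum_congr rfl; intro k _
    rw [sq]
  rw [hS1, hS2]
  have hRHS1 : eNorm (A.mulVec x) ^ (p - 2) = gfun A x ^ (p/2 - 1) := by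
    rw [sqrt_rpow_eq]
    have h : (p - 2) / 2 = p/2 - 1 := by ring
    rw [h]
    rfl
  have hRHS2 : eNorm (A.mulVec x) ^ 2 = gfun A x := by
    rw [eNorm, Real.sq_sqrt (Finset.sum_nonneg fun i _ => sq_nonneg _)]
    rfl
  have hRHS3 : hsNorm (A * B) ^ 2 = ∑ l, ∑ k, (A * B) l k ^ 2 := by
    rw [hsNorm, Real.sq_sqrt]
    exact Finset.sum_nonneg fun l _ => Finset.sum_nonneg fun k _ => sq_nonneg _
  have hRHS4 : eNorm ((A * B)ᵀ.mulVec (A.mulVec x)) ^ 2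
      = ∑ k, (Bᵀ.mulVec ((Aᵀ * A).mulVec x) k) ^ 2 := by
    have h : (A * B)ᵀ.mulVec (A.mulVec x) = Bᵀ.mulVec ((Aᵀ * A).mulVec x) := by
      rw [Matrix.transpose_mul, ← Matrix.mulVec_mulVec, ← Matrix.mulVec_mulVec]
    rw [h, eNorm, Real.sq_sqrt (Finset.sum_nonneg fun i _ => sq_nonneg _)]
  rw [hRHS1, hRHS2, hRHS3, hRHS4]
  have hexp : gfun A x ^ (p/2 - 2) = gfun A x ^ (p/2 - 1) / gfun A x := by
    have h : p/2 - 2 = (p/2 - 1) - 1 := by ring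
    rw [h, Real.rpow_sub hG, Real.rpow_one]
  rw [hexp]
  field_simp
  ring
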